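/- Let X be a d×d matrix in upper-triangular Jordan form with Jordan blocks X^{(1)}, ..., X^{(M)} of sizes n_1, ..., n_M and eigenvalues k_1, ..., k_M. Let ⟨S| = (x_1^{(1)},...,x_{n_1}^{(1)}, ..., x_1^{(M)},...,x_{n_M}^{(M)}) be a row covector. Then the determinant of the d×d matrix whose (i,j) entry is the j-th component of ⟨S|X^{i-1} equals ∏_{a=1}^M (x_1^{(a)})^{n_a} · ∏_{1 ≤ a < b ≤ M} (k_b - k_a)^{n_a n_b}. -/

import Mathlib

open Matrix

/-- The block-diagonal Jordan matrix with `M` upper-triangular Jordan blocks,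
the `a`-th block of size `n a` with eigenvalue `k a` on the diagonal and `1`'s on
the superdiagonal. It is indexed by the sigma type `(a : Fin M) × Fin (n a)`. -/
def jordanMatrix {K : Type*} [Field K] {M : ℕ} (n : Fin M → ℕ) (k : Fin M → K) :
    Matrix ((a : Fin M) × Fin (n a)) ((a : Fin M) × Fin (n a)) K :=
  Matrix.of fun p q =>
    if p.1 = q.1 then
      (if (p.2 : ℕ) = (q.2 : ℕ) then k p.1
       else if (p.2 : ℕ) + 1 = (q.2 : ℕ) then 1 else 0)
    else 0

/-- The canonical (block-ordered) enumeration of the index set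
`(a : Fin M) × Fin (n a)` by `Fin (∑ a, n a)`: the pair `⟨a, i⟩` is sent to
`(∑_{b < a} n b) + i`. -/
def sigmaIndex {M : ℕ} (n : Fin M → ℕ) (p : (a : Fin M) × Fin (n a)) :
    Fin (∑ a, n a) :=
  ⟨(∑ b ∈ Finset.Iio p.1, n b) + (p.2 : ℕ), by
    have h2 : (p.2 : ℕ) < n p.1 := p.2.isLt
    have h1 : (∑ b ∈ insert p.1 (Finset.Iio p.1), n b) ≤ ∑ a, n a :=
      Finset.sum_le_sum_of_subset (Finset.subset_univ _)
    rw [Finset.sum_insert (by simp)] at h1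
    omega⟩

namespace Stmt7Aux

open Finset

variable {K : Type*} [Field K]

lemma sigmaIndex_val {M : ℕ} (n : Fin M → ℕ) (a : Fin M) (i : Fin (n a)) :
    (sigmaIndex n ⟨a, i⟩ : ℕ) = (∑ b ∈ Finset.Iio a, n b) + (i : ℕ) := rfl

lemma sigmaIndex_strict {M : ℕ} (n : Fin M → ℕ) {a b : Fin M} (hab : a < b)
    (i : Fin (n a)) (j : Fin (n b)) :
    (sigmaIndex n ⟨a, i⟩ : ℕ) < (sigmaIndex n ⟨b, j⟩ : ℕ) := by
  have h1 : (∑ c ∈ Finset.Iio a, n c) + n a ≤ ∑ c ∈ Finset.Iio b, n c := by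
    have hsub : insert a (Finset.Iio a) ⊆ Finset.Iio b := by
      intro x hx
      simp only [Finset.mem_insert, Finset.mem_Iio] at hx ⊢
      rcases hx with rfl | hx
      · exact hab
      · exact hx.trans hab
    calc (∑ c ∈ Finset.Iio a, n c) + n a
        = ∑ c ∈ insert a (Finset.Iio a), n c := by
          rw [Finset.sum_insert (by simp), Nat.add_comm]
      _ ≤ ∑ c ∈ Finset.Iio b, n c := Finset.sum_le_sum_of_subset hsub
  have h2 := i.isLt
  simp only [sigmaIndex_val]
  omega

lemma sigmaIndex_injective {M : ℕ} (n : Fin M → ℕ) : Function.Injective (sigmaIndex n) := by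
  rintro ⟨a, i⟩ ⟨b, j⟩ h
  have h' : (sigmaIndex n ⟨a, i⟩ : ℕ) = (sigmaIndex n ⟨b, j⟩ : ℕ) := congrArg Fin.val h
  rcases lt_trichotomy a b with hab | rfl | hab
  · exact absurd h' (sigmaIndex_strict n hab i j).ne
  · simp only [sigmaIndex_val] at h'
    have : (i : ℕ) = j := by omega
    exact Sigma.ext rfl (heq_of_eq (Fin.ext this))
  · exact absurd h'.symm (sigmaIndex_strict n hab j i).ne

noncomputable def sigmaEquiv {M : ℕ} (n : Fin M → ℕ) : ((a : Fin M) × Fin (n a)) ≃ Fin (∑ a, n a) :=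
  Equiv.ofBijective (sigmaIndex n)
    ((Fintype.bijective_iff_injective_and_card _).2 ⟨sigmaIndex_injective n, by simp⟩)

@[simp] lemma sigmaEquiv_apply {M : ℕ} (n : Fin M → ℕ) (p) :
    sigmaEquiv n p = sigmaIndex n p := rfl

lemma sigmaIndex_symm_val {M : ℕ} (n : Fin M → ℕ) (i : Fin (∑ a, n a)) :
    (sigmaIndex n ((sigmaEquiv n).symm i) : ℕ) = (i : ℕ) := by
  exact congrArg Fin.val ((sigmaEquiv n).apply_symm_apply i)

/-- determinant of an "upper-triangular w.r.t. `sigmaIndex`" matrix. -/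
lemma det_of_sigma_upper {M : ℕ} {n : Fin M → ℕ}
    (W : Matrix ((a : Fin M) × Fin (n a)) ((a : Fin M) × Fin (n a)) K)
    (h : ∀ p q, (sigmaIndex n q : ℕ) < (sigmaIndex n p : ℕ) → W p q = 0) :
    W.det = ∏ p, W p p := by
  rw [← Matrix.det_submatrix_equiv_self (sigmaEquiv n).symm W]
  rw [Matrix.det_of_upperTriangular (M := W.submatrix _ _)]
  · exact Equiv.prod_comp (sigmaEquiv n).symm (fun p => W p p)
  · intro i j hij
    exact h _ _ (by rw [sigmaIndex_symm_val, sigmaIndex_symm_val]; exact hij)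

lemma det_of_sigma_lower {M : ℕ} {n : Fin M → ℕ}
    (W : Matrix ((a : Fin M) × Fin (n a)) ((a : Fin M) × Fin (n a)) K)
    (h : ∀ p q, (sigmaIndex n p : ℕ) < (sigmaIndex n q : ℕ) → W p q = 0) :
    W.det = ∏ p, W p p := by
  rw [← Matrix.det_submatrix_equiv_self (sigmaEquiv n).symm W]
  rw [Matrix.det_of_lowerTriangular (W.submatrix _ _)]
  · exact Equiv.prod_comp (sigmaEquiv n).symm (fun p => W p p)
  · intro i j hij
    exact h _ _ (by rw [sigmaIndex_symm_val, sigmaIndex_symm_val]; exact hij)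



def Nmat (m : ℕ) : Matrix (Fin m) (Fin m) K :=
  Matrix.of fun p q => if (p : ℕ) + 1 = (q : ℕ) then 1 else 0

def Jb (m : ℕ) (c : K) : Matrix (Fin m) (Fin m) K :=
  Matrix.of fun p q => if (p : ℕ) = (q : ℕ) then c else if (p : ℕ) + 1 = (q : ℕ) then 1 else 0

lemma Nmat_pow (m t : ℕ) (p q : Fin m) :
    ((Nmat m : Matrix (Fin m) (Fin m) K) ^ t) p q = if (p : ℕ) + t = (q : ℕ) then 1 else 0 := by
  induction t generalizing q with
  | zero =>
    simp only [pow_zero, Matrix.one_apply, Nat.add_zero, Fin.ext_iff]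
  | succ t ih =>
    rw [pow_succ, Matrix.mul_apply]
    have hterm : ∀ b : Fin m, (Nmat m ^ t) p b * (Nmat m : Matrix (Fin m) (Fin m) K) b q
        = if ((p : ℕ) + t = (b : ℕ)) ∧ ((b : ℕ) + 1 = (q : ℕ)) then 1 else 0 := by
      intro b
      rw [ih b]
      simp only [Nmat, Matrix.of_apply]
      split_ifs <;> simp_all
    rw [Finset.sum_congr rfl (fun b _ => hterm b)]
    by_cases hq : (p : ℕ) + (t + 1) = (q : ℕ)
    · rw [Finset.sum_eq_single (⟨(p : ℕ) + t, by have := q.isLt; omega⟩ : Fin m)]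
      · rw [if_pos ⟨rfl, by simp; omega⟩, if_pos hq]
      · intro b _ hb
        rw [if_neg]
        rintro ⟨h1, h2⟩
        exact hb (Fin.ext h1.symm)
      · intro h; exact absurd (Finset.mem_univ _) h
    · rw [Finset.sum_eq_zero, if_neg hq]
      intro b _
      rw [if_neg]
      rintro ⟨h1, h2⟩
      omega

lemma Jb_eq (m : ℕ) (c : K) :
    Jb m c = c • (1 : Matrix (Fin m) (Fin m) K) + Nmat m := by
  ext i j
  simp only [Jb, Nmat, Matrix.of_apply, Matrix.add_apply, Matrix.smul_apply, Matrix.one_apply,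
    smul_eq_mul, mul_ite, mul_one, mul_zero, Fin.ext_iff]
  split_ifs <;> simp_all

lemma Jb_pow (m : ℕ) (c : K) (t : ℕ) (p q : Fin m) :
    ((Jb m c) ^ t) p q =
      if (p : ℕ) ≤ (q : ℕ) then (t.choose ((q : ℕ) - p) : K) * c ^ (t - ((q : ℕ) - p)) else 0 := by
  have hcomm : Commute (c • (1 : Matrix (Fin m) (Fin m) K)) (Nmat m) :=
    (Commute.one_left (Nmat m)).smul_left c
  rw [Jb_eq, hcomm.add_pow', Finset.Nat.sum_antidiagonal_eq_sum_range_succ_mk, Matrix.sum_apply]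
  have hterm : ∀ s ∈ Finset.range (t + 1),
      ((t.choose s • ((c • (1 : Matrix (Fin m) (Fin m) K)) ^ s * Nmat m ^ (t - s)) : Matrix (Fin m) (Fin m) K)) p q
        = if (p : ℕ) + (t - s) = (q : ℕ) then (t.choose s : K) * c ^ s else 0 := by
    intro s _
    rw [smul_pow, one_pow, smul_mul_assoc, one_mul, Matrix.smul_apply, Matrix.smul_apply,
      Nmat_pow, nsmul_eq_mul]
    split_ifs <;> simp [mul_comm]
  rw [Finset.sum_congr rfl hterm]
  by_cases hpq : (p : ℕ) ≤ (q : ℕ)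
  · rw [if_pos hpq]
    by_cases hd : (q : ℕ) - p ≤ t
    · rw [Finset.sum_eq_single (t - ((q : ℕ) - p))]
      · rw [if_pos (by omega), Nat.choose_symm hd]
      · intro b hb hne
        simp only [Finset.mem_range] at hb
        rw [if_neg (by omega)]
      · intro h; exact absurd (Finset.mem_range.2 (by omega)) h
    · rw [Finset.sum_eq_zero, Nat.choose_eq_zero_of_lt (by omega)]
      · simp
      · intro b hb
        simp only [Finset.mem_range] at hb
        rw [if_neg (by omega)]
  · rw [if_neg hpq, Finset.sum_eq_zero]
    intro b hb
    simp only [Finset.mem_range] at hb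
    rw [if_neg (by omega)]

lemma jordanMatrix_eq {M : ℕ} (n : Fin M → ℕ) (k : Fin M → K) :
    jordanMatrix n k = Matrix.blockDiagonal' (fun a => Jb (n a) (k a)) := by
  ext ⟨a, i⟩ ⟨b, j⟩
  by_cases h : a = b
  · subst h
    rw [Matrix.blockDiagonal'_apply_eq]
    simp [jordanMatrix, Jb]
  · rw [Matrix.blockDiagonal'_apply_ne _ _ _ h]
    simp [jordanMatrix, h]

lemma jordanMatrix_pow_apply {M : ℕ} (n : Fin M → ℕ) (k : Fin M → K) (t : ℕ)
    (a : Fin M) (i : Fin (n a)) (b : Fin M) (j : Fin (n b)) :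
    ((jordanMatrix n k) ^ t) ⟨a, i⟩ ⟨b, j⟩ =
      if a = b ∧ (i : ℕ) ≤ (j : ℕ) then
        (t.choose ((j : ℕ) - i) : K) * k b ^ (t - ((j : ℕ) - i)) else 0 := by
  rw [jordanMatrix_eq, ← Matrix.blockDiagonal'_pow]
  by_cases h : a = b
  · subst h
    rw [Matrix.blockDiagonal'_apply_eq, Pi.pow_apply, Jb_pow]
    simp
  · rw [Matrix.blockDiagonal'_apply_ne _ _ _ h]
    simp [h]

lemma vecMul_jordan_pow {M : ℕ} (n : Fin M → ℕ) (k : Fin M → K)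
    (S : ((a : Fin M) × Fin (n a)) → K) (t : ℕ) (c : Fin M) (j : Fin (n c)) :
    (S ᵥ* (jordanMatrix n k) ^ t) ⟨c, j⟩ =
      ∑ l : Fin (n c), (if (l : ℕ) ≤ (j : ℕ) then
          S ⟨c, l⟩ * ((t.choose ((j : ℕ) - l) : K) * k c ^ (t - ((j : ℕ) - l))) else 0) := by
  rw [Matrix.vecMul, dotProduct]
  rw [← Finset.univ_sigma_univ, Finset.sum_sigma]
  rw [Finset.sum_eq_single c]
  · apply Finset.sum_congr rfl
    intro l _
    rw [jordanMatrix_pow_apply]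
    by_cases h : (l : ℕ) ≤ (j : ℕ)
    · rw [if_pos ⟨rfl, h⟩, if_pos h]
    · rw [if_neg (by tauto), if_neg h, mul_zero]
  · intro b _ hb
    apply Finset.sum_eq_zero
    intro l _
    rw [jordanMatrix_pow_apply, if_neg (by tauto), mul_zero]
  · intro h; exact absurd (Finset.mem_univ _) h



lemma sum_fin_trunc {N j : ℕ} (hj : j < N) (g : ℕ → K) :
    (∑ m : Fin N, if (m : ℕ) ≤ j then g m else 0) = ∑ m ∈ Finset.range (j + 1), g m := by
  rw [Fin.sum_univ_eq_sum_range (fun m => if m ≤ j then g m else 0) N]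
  rw [← Finset.sum_subset (Finset.range_subset_range.2 (by omega) :
      Finset.range (j + 1) ⊆ Finset.range N) (fun x _ hx => if_neg (by
        simp only [Finset.mem_range] at hx; omega))]
  apply Finset.sum_congr rfl
  intro m hm
  simp only [Finset.mem_range] at hm
  rw [if_pos (by omega)]

lemma vconv (x : K) (N i j : ℕ) :
    ∑ m ∈ Finset.range (j + 1), ((i.choose m : K) * x ^ (i - m)) *
        ((N.choose (j - m) : K) * x ^ (N - (j - m)))
      = ((N + i).choose j : K) * x ^ (N + i - j) := by
  have h : ∀ m ∈ Finset.range (j + 1),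
      ((i.choose m : K) * x ^ (i - m)) * ((N.choose (j - m) : K) * x ^ (N - (j - m)))
        = ((i.choose m * N.choose (j - m) : ℕ) : K) * x ^ (N + i - j) := by
    intro m hm
    simp only [Finset.mem_range] at hm
    rcases Nat.lt_or_ge i m with h1 | h1
    · simp [Nat.choose_eq_zero_of_lt h1]
    rcases Nat.lt_or_ge N (j - m) with h2 | h2
    · simp [Nat.choose_eq_zero_of_lt h2]
    push_cast
    rw [mul_mul_mul_comm, ← pow_add]
    congr 2
    omega
  rw [Finset.sum_congr rfl h, ← Finset.sum_mul, ← Nat.cast_sum]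
  have : ∑ m ∈ Finset.range (j + 1), i.choose m * N.choose (j - m) = (N + i).choose j := by
    rw [Nat.add_comm N i, Nat.add_choose_eq, Finset.Nat.sum_antidiagonal_eq_sum_range_succ_mk]
  rw [this]

lemma binom_sum (x c : K) (i j : ℕ) :
    ∑ m ∈ Finset.range (i + 1), ((i.choose m : K) * c ^ (i - m)) *
        ((m.choose j : K) * x ^ (m - j))
      = (i.choose j : K) * (x + c) ^ (i - j) := by
  rcases Nat.lt_or_ge i j with hij | hij
  · rw [Finset.sum_eq_zero, Nat.choose_eq_zero_of_lt hij]
    · simp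
    · intro m hm
      simp only [Finset.mem_range] at hm
      rw [Nat.choose_eq_zero_of_lt (by omega : m < j)]
      push_cast; ring
  · have hsplit : ∑ m ∈ Finset.range (i + 1), ((i.choose m : K) * c ^ (i - m)) *
        ((m.choose j : K) * x ^ (m - j))
        = ∑ m ∈ Finset.Ico j (i + 1), ((i.choose m : K) * c ^ (i - m)) *
        ((m.choose j : K) * x ^ (m - j)) := by
      rw [Finset.range_eq_Ico]
      rw [← Finset.sum_Ico_consecutive _ (Nat.zero_le j) (by omega : j ≤ i + 1)]
      rw [Finset.sum_eq_zero, zero_add]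
      intro m hm
      simp only [Finset.mem_Ico] at hm
      rw [Nat.choose_eq_zero_of_lt hm.2]
      push_cast; ring
    rw [hsplit, Finset.sum_Ico_eq_sum_range]
    have hn : i + 1 - j = (i - j) + 1 := by omega
    rw [hn]
    have hterm : ∀ m ∈ Finset.range ((i - j) + 1),
        ((i.choose (j + m) : K) * c ^ (i - (j + m))) *
          (((j + m).choose j : K) * x ^ ((j + m) - j))
        = (i.choose j : K) * (x ^ m * c ^ ((i - j) - m) * ((i - j).choose m : K)) := by
      intro m hm
      simp only [Finset.mem_range] at hm
      have hc : i.choose (j + m) * (j + m).choose j = i.choose j * (i - j).choose m := by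
        have := Nat.choose_mul (n := i) (k := j + m) (s := j) (by omega)
        simpa [Nat.add_sub_cancel_left] using this
      have hx : (j + m) - j = m := by omega
      have hcc : i - (j + m) = (i - j) - m := by omega
      rw [hx, hcc]
      calc ((i.choose (j + m) : K) * c ^ ((i - j) - m)) * (((j + m).choose j : K) * x ^ m)
          = ((i.choose (j + m) * (j + m).choose j : ℕ) : K) * (c ^ ((i - j) - m) * x ^ m) := by
            push_cast; ring
        _ = ((i.choose j * (i - j).choose m : ℕ) : K) * (c ^ ((i - j) - m) * x ^ m) := by rw [hc]
        _ = (i.choose j : K) * (x ^ m * c ^ ((i - j) - m) * ((i - j).choose m : K)) := by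
            push_cast; ring
    rw [Finset.sum_congr rfl hterm, ← Finset.mul_sum, ← add_pow]


lemma sigmaIndex_mono {M : ℕ} {n : Fin M → ℕ} {p q : (a : Fin M) × Fin (n a)}
    (h1 : p.1 = q.1) (h2 : (p.2 : ℕ) ≤ (q.2 : ℕ)) :
    (sigmaIndex n p : ℕ) ≤ (sigmaIndex n q : ℕ) := by
  obtain ⟨a, i⟩ := p
  obtain ⟨b, j⟩ := q
  obtain rfl : a = b := h1
  simp only [sigmaIndex_val]
  simp only [] at h2
  omega

noncomputable def cV {M : ℕ} (n : Fin M → ℕ) (k : Fin M → K) :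
    Matrix ((a : Fin M) × Fin (n a)) ((a : Fin M) × Fin (n a)) K :=
  Matrix.of fun p q =>
    (((sigmaIndex n p : ℕ).choose (q.2 : ℕ) : K)) * k q.1 ^ ((sigmaIndex n p : ℕ) - (q.2 : ℕ))

noncomputable def Lmat {M : ℕ} (n : Fin M → ℕ) (c : K) :
    Matrix ((a : Fin M) × Fin (n a)) ((a : Fin M) × Fin (n a)) K :=
  Matrix.of fun p q =>
    (((sigmaIndex n p : ℕ).choose ((sigmaIndex n q : ℕ)) : K)) *
      c ^ ((sigmaIndex n p : ℕ) - (sigmaIndex n q : ℕ))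

lemma det_Lmat {M : ℕ} (n : Fin M → ℕ) (c : K) : (Lmat n c).det = 1 := by
  rw [det_of_sigma_lower]
  · rw [Finset.prod_eq_one]
    intro p _
    simp [Lmat]
  · intro p q h
    simp only [Lmat, Matrix.of_apply]
    rw [Nat.choose_eq_zero_of_lt h]
    simp

lemma cV_shift {M : ℕ} (n : Fin M → ℕ) (k : Fin M → K) (c : K) :
    (cV n k).det = (cV n (fun a => k a - c)).det := by
  have key : cV n k = Lmat n c * cV n (fun a => k a - c) := by
    ext p ⟨b, j⟩
    rw [Matrix.mul_apply]
    set i := (sigmaIndex n p : ℕ) with hi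
    have hd : i < ∑ a, n a := (sigmaIndex n p).isLt
    have e1 : ∑ q, Lmat n c p q * cV n (fun a => k a - c) q ⟨b, j⟩
        = ∑ m : Fin (∑ a, n a), ((i.choose (m : ℕ) : K) * c ^ (i - (m : ℕ))) *
            ((((m : ℕ)).choose ((j : ℕ)) : K) * (k b - c) ^ ((m : ℕ) - (j : ℕ))) :=
      Equiv.sum_comp (sigmaEquiv n) (fun m : Fin (∑ a, n a) =>
        ((i.choose (m : ℕ) : K) * c ^ (i - (m : ℕ))) *
          ((((m : ℕ)).choose ((j : ℕ)) : K) * (k b - c) ^ ((m : ℕ) - (j : ℕ))))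
    rw [e1, Fin.sum_univ_eq_sum_range (fun m : ℕ =>
        ((i.choose m : K) * c ^ (i - m)) * (((m.choose ((j : ℕ))) : K) * (k b - c) ^ (m - (j : ℕ))))]
    rw [← Finset.sum_subset (Finset.range_subset_range.2 (by omega) :
        Finset.range (i + 1) ⊆ Finset.range (∑ a, n a))
      (fun x _ hx => by
        simp only [Finset.mem_range] at hx
        rw [Nat.choose_eq_zero_of_lt (by omega : i < x)]
        simp)]
    rw [binom_sum, sub_add_cancel]
    rfl
  rw [key, Matrix.det_mul, det_Lmat, one_mul]

noncomputable def Tmat {M : ℕ} (n : Fin M → ℕ) (S : ((a : Fin M) × Fin (n a)) → K) :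
    Matrix ((a : Fin M) × Fin (n a)) ((a : Fin M) × Fin (n a)) K :=
  Matrix.of fun q r =>
    if h : q.1 = r.1 ∧ (q.2 : ℕ) ≤ (r.2 : ℕ) then
      S ⟨q.1, ⟨(r.2 : ℕ) - (q.2 : ℕ),
        lt_of_le_of_lt (Nat.sub_le _ _) (lt_of_lt_of_le r.2.isLt (le_of_eq (congrArg n h.1).symm))⟩⟩
    else 0

lemma det_Tmat {M : ℕ} (n : Fin M → ℕ) (hn : ∀ a, 0 < n a)
    (S : ((a : Fin M) × Fin (n a)) → K) :
    (Tmat n S).det = ∏ a, S ⟨a, ⟨0, hn a⟩⟩ ^ (n a) := by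
  rw [det_of_sigma_upper]
  · have hdiag : ∀ p : (a : Fin M) × Fin (n a), Tmat n S p p = S ⟨p.1, ⟨0, hn p.1⟩⟩ := by
      intro p
      show dite _ _ _ = _
      rw [dif_pos ⟨rfl, le_rfl⟩]
      congr 1
      exact Sigma.ext rfl (heq_of_eq (Fin.ext (by simp)))
    rw [Finset.prod_congr rfl (fun p _ => hdiag p)]
    rw [← Finset.univ_sigma_univ, Finset.prod_sigma]
    apply Finset.prod_congr rfl
    intro a _
    have h0 : (∏ _s : Fin (n a), S ⟨a, ⟨0, hn a⟩⟩) = S ⟨a, ⟨0, hn a⟩⟩ ^ n a := by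
      rw [Finset.prod_const, Finset.card_univ, Fintype.card_fin]
    exact h0
  · intro p q h
    show dite _ _ _ = _
    rw [dif_neg]
    rintro ⟨h1, h2⟩
    exact absurd h (not_lt.2 (sigmaIndex_mono h1 h2))

lemma A_eq {M : ℕ} (n : Fin M → ℕ) (k : Fin M → K) (S : ((a : Fin M) × Fin (n a)) → K) :
    (Matrix.of fun p q : (a : Fin M) × Fin (n a) =>
        (S ᵥ* (jordanMatrix n k) ^ ((sigmaIndex n p : ℕ))) q)
      = cV n k * Tmat n S := by
  ext p ⟨c, j⟩
  rw [Matrix.of_apply, vecMul_jordan_pow, Matrix.mul_apply]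
  set t := (sigmaIndex n p : ℕ) with ht
  set g₁ : ℕ → K := fun m => if h : m < n c then
      S ⟨c, ⟨m, h⟩⟩ * ((t.choose ((j : ℕ) - m) : K) * k c ^ (t - ((j : ℕ) - m))) else 0 with hg₁
  set g₂ : ℕ → K := fun m => if h : (j : ℕ) - m < n c then
      ((t.choose m : K) * k c ^ (t - m)) * S ⟨c, ⟨(j : ℕ) - m, h⟩⟩ else 0 with hg₂
  have hL : (∑ l : Fin (n c), (if (l : ℕ) ≤ (j : ℕ) then
        S ⟨c, l⟩ * ((t.choose ((j : ℕ) - l) : K) * k c ^ (t - ((j : ℕ) - l))) else 0))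
      = ∑ m ∈ Finset.range ((j : ℕ) + 1), g₁ m := by
    rw [← sum_fin_trunc j.isLt g₁]
    apply Finset.sum_congr rfl
    intro l _
    by_cases h : (l : ℕ) ≤ (j : ℕ)
    · rw [if_pos h, if_pos h, hg₁]
      simp only []
      rw [dif_pos l.isLt]
    · rw [if_neg h, if_neg h]
  have hR : ∑ q, cV n k p q * Tmat n S q ⟨c, j⟩
      = ∑ m ∈ Finset.range ((j : ℕ) + 1), g₂ m := by
    rw [← Finset.univ_sigma_univ, Finset.sum_sigma]
    rw [Finset.sum_eq_single c]
    · rw [← sum_fin_trunc j.isLt g₂]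
      apply Finset.sum_congr rfl
      intro m _
      by_cases h : (m : ℕ) ≤ (j : ℕ)
      · rw [if_pos h]
        have hT : Tmat n S ⟨c, m⟩ ⟨c, j⟩ = S ⟨c, ⟨(j : ℕ) - m,
            lt_of_le_of_lt (Nat.sub_le _ _) j.isLt⟩⟩ := dif_pos ⟨rfl, h⟩
        rw [hT, hg₂]
        simp only []
        rw [dif_pos (lt_of_le_of_lt (Nat.sub_le _ _) j.isLt)]
        rfl
      · have hT : Tmat n S ⟨c, m⟩ ⟨c, j⟩ = 0 := dif_neg (by tauto)
        rw [if_neg h, hT, mul_zero]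
    · intro b _ hb
      apply Finset.sum_eq_zero
      intro m _
      have hT : Tmat n S ⟨b, m⟩ ⟨c, j⟩ = 0 := dif_neg (by tauto)
      rw [hT, mul_zero]
    · intro h; exact absurd (Finset.mem_univ _) h
  rw [hL, hR]
  rw [← Finset.sum_range_reflect g₂ ((j : ℕ) + 1)]
  apply Finset.sum_congr rfl
  intro m hm
  simp only [Finset.mem_range] at hm
  have hmj : m ≤ (j : ℕ) := by omega
  have h1 : (j : ℕ) + 1 - 1 - m = (j : ℕ) - m := by omega
  rw [h1, hg₁, hg₂]
  simp only []
  have h2 : (j : ℕ) - ((j : ℕ) - m) = m := by omega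
  simp only [h2]
  have hmc : m < n c := lt_of_le_of_lt hmj j.isLt
  rw [dif_pos hmc, dif_pos hmc]
  ring

lemma sigmaIndex_zero {M : ℕ} (n : Fin (M + 1) → ℕ) (i : Fin (n 0)) :
    (sigmaIndex n ⟨0, i⟩ : ℕ) = (i : ℕ) := by
  rw [sigmaIndex_val]
  have h : Finset.Iio (0 : Fin (M + 1)) = ∅ := by
    ext x
    simp
  rw [h, Finset.sum_empty, Nat.zero_add]

lemma sigmaIndex_succ {M : ℕ} (n : Fin (M + 1) → ℕ) (a : Fin M) (i : Fin (n a.succ)) :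
    (sigmaIndex n ⟨a.succ, i⟩ : ℕ)
      = n 0 + (sigmaIndex (fun b : Fin M => n b.succ) ⟨a, i⟩ : ℕ) := by
  rw [sigmaIndex_val, sigmaIndex_val]
  have key : ∑ b ∈ Finset.Iio a.succ, n b = n 0 + ∑ b ∈ Finset.Iio a, n b.succ := by
    have h1 : Finset.Iio a.succ = Finset.univ.filter (fun x => x < a.succ) := by
      ext x; simp
    have h2 : Finset.Iio a = Finset.univ.filter (fun x => x < a) := by
      ext x; simp
    rw [h1, h2, Finset.sum_filter, Finset.sum_filter, Fin.sum_univ_succ]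
    rw [if_pos (Fin.succ_pos a)]
    simp only [Fin.succ_lt_succ_iff]
  omega

noncomputable def consEquiv {M : ℕ} (n : Fin (M + 1) → ℕ) :
    (Fin (n 0) ⊕ ((a : Fin M) × Fin (n a.succ))) ≃ ((a : Fin (M + 1)) × Fin (n a)) :=
  Equiv.ofBijective
    (Sum.elim (fun i => ⟨0, i⟩) (fun p => ⟨p.1.succ, p.2⟩))
    ((Fintype.bijective_iff_injective_and_card _).2 ⟨by
      rintro (i | ⟨a, i⟩) (j | ⟨b, j⟩) h <;> simp only [Sum.elim_inl, Sum.elim_inr] at h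
      · obtain ⟨-, h2⟩ := Sigma.mk.inj_iff.1 h
        rw [eq_of_heq h2]
      · exact absurd (Sigma.mk.inj_iff.1 h).1 (Fin.succ_ne_zero b).symm
      · exact absurd (Sigma.mk.inj_iff.1 h).1 (Fin.succ_ne_zero a)
      · obtain ⟨h1, h2⟩ := Sigma.mk.inj_iff.1 h
        obtain rfl : a = b := Fin.succ_injective _ h1
        rw [eq_of_heq h2],
      by simp [Fintype.card_sigma, Fin.sum_univ_succ]⟩)

@[simp] lemma consEquiv_inl {M : ℕ} (n : Fin (M + 1) → ℕ) (i : Fin (n 0)) :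
    consEquiv n (Sum.inl i) = ⟨0, i⟩ := rfl

@[simp] lemma consEquiv_inr {M : ℕ} (n : Fin (M + 1) → ℕ) (p : (a : Fin M) × Fin (n a.succ)) :
    consEquiv n (Sum.inr p) = ⟨p.1.succ, p.2⟩ := rfl

noncomputable def Umat {M : ℕ} (n : Fin M → ℕ) (N0 : ℕ) (x : Fin M → K) :
    Matrix ((a : Fin M) × Fin (n a)) ((a : Fin M) × Fin (n a)) K :=
  Matrix.of fun q r =>
    if q.1 = r.1 ∧ (q.2 : ℕ) ≤ (r.2 : ℕ) then
      ((N0.choose ((r.2 : ℕ) - (q.2 : ℕ)) : K)) * x q.1 ^ (N0 - ((r.2 : ℕ) - (q.2 : ℕ)))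
    else 0

noncomputable def Cmat {M : ℕ} (n : Fin M → ℕ) (N0 : ℕ) (x : Fin M → K) :
    Matrix ((a : Fin M) × Fin (n a)) ((a : Fin M) × Fin (n a)) K :=
  Matrix.of fun p q =>
    (((N0 + (sigmaIndex n p : ℕ)).choose (q.2 : ℕ) : K)) *
      x q.1 ^ (N0 + (sigmaIndex n p : ℕ) - (q.2 : ℕ))

lemma Cmat_eq {M : ℕ} (n : Fin M → ℕ) (N0 : ℕ) (x : Fin M → K) :
    Cmat n N0 x = cV n x * Umat n N0 x := by
  ext p ⟨b, j⟩
  rw [Matrix.mul_apply, ← Finset.univ_sigma_univ, Finset.sum_sigma]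
  have hsingle : (∑ a : Fin M, ∑ s : Fin (n a),
        cV n x p ⟨a, s⟩ * Umat n N0 x ⟨a, s⟩ ⟨b, j⟩)
      = ∑ s : Fin (n b), cV n x p ⟨b, s⟩ * Umat n N0 x ⟨b, s⟩ ⟨b, j⟩ := by
    apply Finset.sum_eq_single b
    · intro c _ hc
      apply Finset.sum_eq_zero
      intro m _
      have : Umat n N0 x ⟨c, m⟩ ⟨b, j⟩ = 0 := if_neg (by tauto)
      rw [this, mul_zero]
    · intro h; exact absurd (Finset.mem_univ _) h
  rw [hsingle]
  have hterm : ∀ m : Fin (n b),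
      cV n x p ⟨b, m⟩ * Umat n N0 x ⟨b, m⟩ ⟨b, j⟩
      = if (m : ℕ) ≤ (j : ℕ) then
          ((((sigmaIndex n p : ℕ)).choose ((m : ℕ)) : K) *
            x b ^ ((sigmaIndex n p : ℕ) - (m : ℕ))) *
          (((N0.choose ((j : ℕ) - (m : ℕ)) : K)) * x b ^ (N0 - ((j : ℕ) - (m : ℕ)))) else 0 := by
    intro m
    by_cases h : (m : ℕ) ≤ (j : ℕ)
    · rw [if_pos h]
      have : Umat n N0 x ⟨b, m⟩ ⟨b, j⟩
          = ((N0.choose ((j : ℕ) - (m : ℕ)) : K)) * x b ^ (N0 - ((j : ℕ) - (m : ℕ))) :=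
        if_pos ⟨rfl, h⟩
      rw [this]
      rfl
    · rw [if_neg h]
      have : Umat n N0 x ⟨b, m⟩ ⟨b, j⟩ = 0 := if_neg (by tauto)
      rw [this, mul_zero]
  rw [Finset.sum_congr rfl (fun m _ => hterm m),
    sum_fin_trunc j.isLt (fun m : ℕ =>
      ((((sigmaIndex n p : ℕ)).choose m : K) * x b ^ ((sigmaIndex n p : ℕ) - m)) *
        (((N0.choose ((j : ℕ) - m) : K)) * x b ^ (N0 - ((j : ℕ) - m)))), vconv]
  rfl

lemma det_Umat {M : ℕ} (n : Fin M → ℕ) (N0 : ℕ) (x : Fin M → K) :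
    (Umat n N0 x).det = ∏ b : Fin M, x b ^ (N0 * n b) := by
  rw [det_of_sigma_upper]
  · have hdiag : ∀ p : (a : Fin M) × Fin (n a), Umat n N0 x p p = x p.1 ^ N0 := by
      intro p
      show (if _ then _ else _) = _
      rw [if_pos ⟨rfl, le_rfl⟩, Nat.sub_self, Nat.choose_zero_right, Nat.sub_zero,
        Nat.cast_one, one_mul]
    rw [Finset.prod_congr rfl (fun p _ => hdiag p)]
    rw [← Finset.univ_sigma_univ, Finset.prod_sigma]
    apply Finset.prod_congr rfl
    intro b _
    have h0 : (∏ _s : Fin (n b), x b ^ N0) = x b ^ (N0 * n b) := by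
      rw [Finset.prod_const, Finset.card_univ, Fintype.card_fin, ← pow_mul]
    exact h0
  · intro p q h
    show (if _ then _ else _) = _
    rw [if_neg]
    rintro ⟨h1, h2⟩
    exact absurd h (not_lt.2 (sigmaIndex_mono h1 h2))

lemma cV_det {M : ℕ} (n : Fin M → ℕ) (k : Fin M → K) :
    (cV n k).det = ∏ a, ∏ b ∈ Finset.Ioi a, (k b - k a) ^ (n a * n b) := by
  induction M with
  | zero =>
    haveI : IsEmpty ((a : Fin 0) × Fin (n a)) := ⟨fun p => p.1.elim0⟩
    rw [Matrix.det_isEmpty]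
    rw [Finset.univ_eq_empty, Finset.prod_empty]
  | succ M ih =>
    rw [cV_shift n k (k 0)]
    have hsub : (cV n (fun a => k a - k 0)).submatrix (consEquiv n) (consEquiv n)
        = Matrix.fromBlocks 1
          (Matrix.of (fun (i : Fin (n 0)) (q : (a : Fin M) × Fin (n a.succ)) =>
            (((i : ℕ).choose (q.2 : ℕ) : K)) * (k q.1.succ - k 0) ^ ((i : ℕ) - (q.2 : ℕ))))
          0
          (Cmat (fun b : Fin M => n b.succ) (n 0) (fun b => k b.succ - k 0)) := by
      ext x y
      rcases x with i | p <;> rcases y with i' | q <;>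
        simp only [Matrix.submatrix_apply, consEquiv_inl, consEquiv_inr,
          Matrix.fromBlocks_apply₁₁, Matrix.fromBlocks_apply₁₂, Matrix.fromBlocks_apply₂₁,
          Matrix.fromBlocks_apply₂₂]
      · show (((sigmaIndex n ⟨0, i⟩ : ℕ).choose ((i' : ℕ)) : K)) *
            (k 0 - k 0) ^ ((sigmaIndex n ⟨0, i⟩ : ℕ) - (i' : ℕ)) = _
        rw [sigmaIndex_zero, sub_self, Matrix.one_apply]
        rcases lt_trichotomy (i : ℕ) (i' : ℕ) with h | h | h
        · rw [Nat.choose_eq_zero_of_lt h, if_neg (by simp [Fin.ext_iff]; omega)]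
          simp
        · rw [if_pos (Fin.ext h), h, Nat.choose_self, Nat.sub_self, pow_zero]
          simp
        · rw [zero_pow (by omega), if_neg (by simp [Fin.ext_iff]; omega), mul_zero]
      · show (((sigmaIndex n ⟨0, i⟩ : ℕ).choose ((q.2 : ℕ)) : K)) *
            (k q.1.succ - k 0) ^ ((sigmaIndex n ⟨0, i⟩ : ℕ) - (q.2 : ℕ)) = _
        rw [sigmaIndex_zero]
        rfl
      · show (((sigmaIndex n ⟨p.1.succ, p.2⟩ : ℕ).choose ((i' : ℕ)) : K)) *
            (k 0 - k 0) ^ ((sigmaIndex n ⟨p.1.succ, p.2⟩ : ℕ) - (i' : ℕ)) = _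
        rw [sigmaIndex_succ, sub_self, zero_pow (by have := i'.isLt; omega), mul_zero]
        rfl
      · show (((sigmaIndex n ⟨p.1.succ, p.2⟩ : ℕ).choose ((q.2 : ℕ)) : K)) *
            (k q.1.succ - k 0) ^ ((sigmaIndex n ⟨p.1.succ, p.2⟩ : ℕ) - (q.2 : ℕ)) = _
        rw [sigmaIndex_succ]
        rfl
    have hdet1 : (cV n (fun a => k a - k 0)).det
        = (Cmat (fun b : Fin M => n b.succ) (n 0) (fun b => k b.succ - k 0)).det := by
      rw [← Matrix.det_submatrix_equiv_self (consEquiv n) (cV n (fun a => k a - k 0)), hsub,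
        Matrix.det_fromBlocks_zero₂₁, Matrix.det_one, one_mul]
    rw [hdet1, Cmat_eq, Matrix.det_mul, det_Umat, ih]
    -- assemble RHS
    rw [Fin.prod_univ_succ, Fin.prod_Ioi_zero]
    have hIoi : ∀ a : Fin M, (∏ b ∈ Finset.Ioi a.succ, (k b - k a.succ) ^ (n a.succ * n b))
        = ∏ b ∈ Finset.Ioi a, (k b.succ - k a.succ) ^ (n a.succ * n b.succ) := by
      intro a
      rw [Fin.prod_Ioi_succ]
    rw [Finset.prod_congr rfl (fun a _ => hIoi a)]
    have hsub2 : ∀ a : Fin M, (∏ b ∈ Finset.Ioi a,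
          ((k b.succ - k 0) - (k a.succ - k 0)) ^ (n a.succ * n b.succ))
        = ∏ b ∈ Finset.Ioi a, (k b.succ - k a.succ) ^ (n a.succ * n b.succ) := by
      intro a
      apply Finset.prod_congr rfl
      intro b _
      rw [sub_sub_sub_cancel_right]
    rw [Finset.prod_congr rfl (fun a _ => hsub2 a)]
    ring

end Stmt7Aux

/-- confluent Vandermonde determinant. Let `X` be the `d × d`
Jordan matrix with blocks of sizes `n a` and eigenvalues `k a` (`d = ∑ n a`), and
let `S` be a row covector. Then the determinant of the `d × d` matrix whose `i`-th
row is `S ⬝ X^(i-1)` (rows enumerated in block order) equals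
`∏_a (x₁^(a))^(n a) · ∏_{a < b} (k b - k a)^(n a · n b)`, where `x₁^(a)` is the
component of `S` on the first coordinate of block `a`. -/
theorem stmt7 {K : Type*} [Field K] {M : ℕ} (n : Fin M → ℕ) (hn : ∀ a, 0 < n a)
    (k : Fin M → K) (S : ((a : Fin M) × Fin (n a)) → K) :
    Matrix.det (Matrix.of fun p q : (a : Fin M) × Fin (n a) =>
        (S ᵥ* (jordanMatrix n k) ^ ((sigmaIndex n p : ℕ))) q)
      = (∏ a, S ⟨a, ⟨0, hn a⟩⟩ ^ n a) *
        ∏ a, ∏ b ∈ Finset.Ioi a, (k b - k a) ^ (n a * n b) := by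
  rw [Stmt7Aux.A_eq n k S, Matrix.det_mul, Stmt7Aux.cV_det, Stmt7Aux.det_Tmat n hn S, mul_comm]
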